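/- arXiv:1801.10020 — 6 statements merged into one kernel-verified Lean document; each statement's English description precedes it below -/
import Mathlib

section
/- Let A, X be n×n complex matrices with X = X*, and let B be n×m₁ and C be m₂×n complex matrices. If X satisfies the Riccati equation X C* C X - i(A X - X A*) + B B* = 0, then setting Ã = A + i B B* X⁻¹ (assuming X invertible), θ₁ = B, θ₂ = -i X C*, and Λ₀ = [θ₁ θ₂] (the n×(m₁+m₂) block matrix), one has the identity Ã X - X Ã* = i Λ₀ j Λ₀*, where j = diag(I_{m₁}, -I_{m₂}). -/
open Matrix

/-- If `X = X*` is invertible and satisfies the Riccati equation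
`X C* C X - i (A X - X A*) + B B* = 0`, then with `Ã = A + i B B* X⁻¹`, `θ₁ = B`,
`θ₂ = -i X C*`, `Λ₀ = [θ₁ θ₂]` and `j = diag(I, -I)`, one has
`Ã X - X Ã* = i Λ₀ j Λ₀*`. -/
theorem riccati_to_lyapunov_identity {n m₁ m₂ : ℕ}
    (A X : Matrix (Fin n) (Fin n) ℂ)
    (B : Matrix (Fin n) (Fin m₁) ℂ) (C : Matrix (Fin m₂) (Fin n) ℂ)
    (hX : Xᴴ = X) (hXinv : IsUnit X)
    (hRic : X * Cᴴ * C * X - Complex.I • (A * X - X * Aᴴ) + B * Bᴴ = 0)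
    (Atil : Matrix (Fin n) (Fin n) ℂ) (hAtil : Atil = A + Complex.I • (B * Bᴴ * X⁻¹))
    (θ₁ : Matrix (Fin n) (Fin m₁) ℂ) (hθ₁ : θ₁ = B)
    (θ₂ : Matrix (Fin n) (Fin m₂) ℂ) (hθ₂ : θ₂ = -Complex.I • (X * Cᴴ))
    (Λ₀ : Matrix (Fin n) (Fin m₁ ⊕ Fin m₂) ℂ) (hΛ₀ : Λ₀ = fromCols θ₁ θ₂)
    (j : Matrix (Fin m₁ ⊕ Fin m₂) (Fin m₁ ⊕ Fin m₂) ℂ)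
    (hj : j = fromBlocks 1 0 0 (-1)) :
    Atil * X - X * Atilᴴ = Complex.I • (Λ₀ * j * Λ₀ᴴ) := by
  have hdet : IsUnit X.det := (Matrix.isUnit_iff_isUnit_det X).mp hXinv
  have hXiX : X⁻¹ * X = 1 := Matrix.nonsing_inv_mul X hdet
  have hXXi : X * X⁻¹ = 1 := Matrix.mul_nonsing_inv X hdet
  have key : Λ₀ * j * Λ₀ᴴ = B * Bᴴ - X * Cᴴ * C * X := by
    subst hθ₁ hθ₂ hΛ₀ hj
    rw [conjTranspose_fromCols_eq_fromRows_conjTranspose,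
        fromCols_mul_fromBlocks, fromCols_mul_fromRows]
    simp [Matrix.mul_smul, Matrix.smul_mul, smul_smul, Complex.I_mul_I, hX,
      conjTranspose_mul, Matrix.mul_assoc, sub_eq_add_neg]
  have h1 : Complex.I • (A * X - X * Aᴴ) = X * Cᴴ * C * X + B * Bᴴ := by
    have h := hRic
    rw [sub_add_eq_add_sub, sub_eq_zero] at h
    exact h.symm
  have h2 : A * X - X * Aᴴ = (-Complex.I) • (X * Cᴴ * C * X + B * Bᴴ) := by
    rw [← h1, smul_smul]; norm_num [Complex.I_mul_I]
  rw [key, hAtil]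
  simp only [conjTranspose_add, conjTranspose_smul, conjTranspose_mul,
    conjTranspose_conjTranspose, conjTranspose_nonsing_inv, hX, Complex.star_def,
    Complex.conj_I, add_mul, mul_add, Matrix.smul_mul, Matrix.mul_smul, neg_smul, Matrix.mul_neg, Matrix.neg_mul]
  rw [Matrix.mul_assoc (B * Bᴴ) X⁻¹ X, hXiX, Matrix.mul_one,
      ← Matrix.mul_assoc X X⁻¹ (B * Bᴴ), hXXi, Matrix.one_mul]
  rw [show A * X = X * Aᴴ + (-Complex.I) • (X * Cᴴ * C * X + B * Bᴴ) by
    rw [← h2]; abel]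
  module
end

section
/- Let A be an n×n complex matrix, θ₁ an n×m₁ matrix, θ₂ an n×m₂ matrix, and define Λ(x) = [e^{-ixA} θ₁, e^{ixA} θ₂] and S(x) = S(0) + ∫₀ˣ Λ(t) Λ(t)* dt for x ≥ 0, where S(0) is self-adjoint. If A S(0) - S(0) A* = i Λ(0) j Λ(0)* with j = diag(I_{m₁}, -I_{m₂}), then A S(x) - S(x) A* = i Λ(x) j Λ(x)* for all x ≥ 0. -/
open Matrix MeasureTheory intervalIntegral NormedSpace

attribute [local instance] Matrix.frobeniusNormedAddCommGroup Matrix.frobeniusNormedSpace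
attribute [local instance] Matrix.frobeniusNormedRing Matrix.frobeniusNormedAlgebra

namespace LyapAux

section
noncomputable abbrev frobTop (m k : ℕ) : TopologicalSpace (Matrix (Fin m) (Fin k) ℂ) :=
  (Matrix.frobeniusNormedAddCommGroup).toUniformSpace.toTopologicalSpace
attribute [local instance] frobTop

noncomputable def mulL (p q r : ℕ) :
    Matrix (Fin p) (Fin q) ℂ →L[ℝ] Matrix (Fin q) (Fin r) ℂ →L[ℝ] Matrix (Fin p) (Fin r) ℂ :=
  LinearMap.toContinuousLinearMap
  { toFun := fun M => LinearMap.toContinuousLinearMap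
      { toFun := fun N => M * N
        map_add' := fun N₁ N₂ => Matrix.mul_add M N₁ N₂
        map_smul' := fun c N => Matrix.mul_smul M c N }
    map_add' := fun M₁ M₂ => by ext N : 1; simp [Matrix.add_mul]
    map_smul' := fun c M => by ext N : 1; simp [Matrix.smul_mul] }

end

@[simp] lemma mulL_apply {p q r : ℕ} (M : Matrix (Fin p) (Fin q) ℂ)
    (N : Matrix (Fin q) (Fin r) ℂ) : mulL p q r M N = M * N := rfl

lemma hasDerivAt_matmul {p q r : ℕ} {f : ℝ → Matrix (Fin p) (Fin q) ℂ}
    {g : ℝ → Matrix (Fin q) (Fin r) ℂ} {f' : Matrix (Fin p) (Fin q) ℂ}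
    {g' : Matrix (Fin q) (Fin r) ℂ} {x : ℝ}
    (hf : HasDerivAt f f' x) (hg : HasDerivAt g g' x) :
    HasDerivAt (fun t => f t * g t) (f' * g x + f x * g') x := by
  have h0 := HasFDerivAt.comp_hasDerivAt (f := f) (f' := f') x (l := mulL p q r) (l' := mulL p q r)
    (by exact (mulL p q r).hasFDerivAt)
    (by exact hf)
  have h1 : HasDerivAt (fun t => mulL p q r (f t)) (mulL p q r f') x := h0
  have h2 := h1.clm_apply (u := g) (u' := g') (by exact hg)
  exact h2

noncomputable def ctL (p q : ℕ) :
    Matrix (Fin p) (Fin q) ℂ →L[ℝ] Matrix (Fin q) (Fin p) ℂ :=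
  LinearMap.toContinuousLinearMap
  { toFun := conjTranspose
    map_add' := fun M N => Matrix.conjTranspose_add M N
    map_smul' := fun c M => by simp [Matrix.conjTranspose_smul] }

@[simp] lemma ctL_apply {p q : ℕ} (M : Matrix (Fin p) (Fin q) ℂ) : ctL p q M = Mᴴ := rfl

lemma hasDerivAt_ct {p q : ℕ} {f : ℝ → Matrix (Fin p) (Fin q) ℂ}
    {f' : Matrix (Fin p) (Fin q) ℂ} {x : ℝ} (hf : HasDerivAt f f' x) :
    HasDerivAt (fun t => (f t)ᴴ) f'ᴴ x := by
  exact (ctL p q).hasFDerivAt.comp_hasDerivAt x (by exact hf)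

lemma hasDerivAt_exp_aux {n : ℕ} (A : Matrix (Fin n) (Fin n) ℂ) (c : ℂ) (x : ℝ) :
    HasDerivAt (fun t : ℝ => exp ((c * (t : ℂ)) • A))
      (c • (A * exp ((c * (x : ℂ)) • A))) x := by
  have h1 : HasDerivAt (fun z : ℂ => exp (z • A))
      (A * exp (((c * (x : ℂ))) • A)) (c * (x : ℂ)) :=
    hasDerivAt_exp_smul_const' A _
  have h2 : HasDerivAt (fun t : ℝ => (c * (t : ℂ))) c x := by
    simpa using ((hasDerivAt_id x).ofReal_comp.const_mul c)
  have h3 := h1.scomp x h2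
  exact h3

end LyapAux

open LyapAux
/-- With `Λ(x) = [e^{-ixA} θ₁, e^{ixA} θ₂]` and
`S(x) = S(0) + ∫₀ˣ Λ(t) Λ(t)* dt`, `S(0) = S(0)*`, if
`A S(0) - S(0) A* = i Λ(0) j Λ(0)*` then `A S(x) - S(x) A* = i Λ(x) j Λ(x)*` for all `x ≥ 0`. -/
theorem lyapunov_identity_propagates {n m₁ m₂ : ℕ}
    (A : Matrix (Fin n) (Fin n) ℂ)
    (θ₁ : Matrix (Fin n) (Fin m₁) ℂ) (θ₂ : Matrix (Fin n) (Fin m₂) ℂ)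
    (Λ : ℝ → Matrix (Fin n) (Fin m₁ ⊕ Fin m₂) ℂ)
    (hΛ : ∀ x : ℝ, Λ x = fromCols
      (exp ((-(Complex.I * (x : ℂ))) • A) * θ₁)
      (exp ((Complex.I * (x : ℂ)) • A) * θ₂))
    (S₀ : Matrix (Fin n) (Fin n) ℂ) (hS₀ : S₀ᴴ = S₀)
    (S : ℝ → Matrix (Fin n) (Fin n) ℂ)
    (hS : ∀ x : ℝ, S x = S₀ + ∫ t in (0:ℝ)..x, Λ t * (Λ t)ᴴ)
    (j : Matrix (Fin m₁ ⊕ Fin m₂) (Fin m₁ ⊕ Fin m₂) ℂ)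
    (hj : j = fromBlocks 1 0 0 (-1))
    (h0 : A * S₀ - S₀ * Aᴴ = Complex.I • (Λ 0 * j * (Λ 0)ᴴ)) :
    ∀ x : ℝ, 0 ≤ x → A * S x - S x * Aᴴ = Complex.I • (Λ x * j * (Λ x)ᴴ) := by
  set u₁ : ℝ → Matrix (Fin n) (Fin m₁) ℂ :=
    fun t => exp (((-Complex.I) * (t : ℂ)) • A) * θ₁ with hu₁def
  set u₂ : ℝ → Matrix (Fin n) (Fin m₂) ℂ :=
    fun t => exp ((Complex.I * (t : ℂ)) • A) * θ₂ with hu₂def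
  have hcols : ∀ t : ℝ, Λ t = fromCols (u₁ t) (u₂ t) := by
    intro t; rw [hΛ t]; simp [hu₁def, hu₂def, neg_mul]
  -- derivatives of u₁, u₂
  have hu₁ : ∀ t : ℝ, HasDerivAt u₁ ((-Complex.I) • (A * u₁ t)) t := by
    intro t
    have h1 := hasDerivAt_matmul (hasDerivAt_exp_aux A (-Complex.I) t) (hasDerivAt_const t θ₁)
    simpa [hu₁def, smul_mul_assoc, Matrix.mul_assoc] using h1
  have hu₂ : ∀ t : ℝ, HasDerivAt u₂ (Complex.I • (A * u₂ t)) t := by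
    intro t
    have h1 := hasDerivAt_matmul (hasDerivAt_exp_aux A Complex.I t) (hasDerivAt_const t θ₂)
    simpa [hu₂def, smul_mul_assoc, Matrix.mul_assoc] using h1
  set h : ℝ → Matrix (Fin n) (Fin n) ℂ :=
    fun t => u₁ t * (u₁ t)ᴴ + u₂ t * (u₂ t)ᴴ with hhdef
  set g : ℝ → Matrix (Fin n) (Fin n) ℂ :=
    fun t => Complex.I • (u₁ t * (u₁ t)ᴴ - u₂ t * (u₂ t)ᴴ) with hgdef
  have key : ∀ t : ℝ, Λ t * j * (Λ t)ᴴ = u₁ t * (u₁ t)ᴴ - u₂ t * (u₂ t)ᴴ := by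
    intro t
    rw [hcols t, hj, Matrix.conjTranspose_fromCols_eq_fromRows_conjTranspose,
      Matrix.fromCols_mul_fromBlocks, Matrix.fromCols_mul_fromRows]
    simp [sub_eq_add_neg]
  have key2 : ∀ t : ℝ, Λ t * (Λ t)ᴴ = h t := by
    intro t
    rw [hcols t, Matrix.conjTranspose_fromCols_eq_fromRows_conjTranspose,
      Matrix.fromCols_mul_fromRows]
  -- derivative building blocks
  have hB₁ : ∀ t : ℝ, HasDerivAt (fun s => u₁ s * (u₁ s)ᴴ)
      ((-Complex.I) • (A * (u₁ t * (u₁ t)ᴴ)) + Complex.I • ((u₁ t * (u₁ t)ᴴ) * Aᴴ)) t := by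
    intro t
    have := hasDerivAt_matmul (hu₁ t) (hasDerivAt_ct (hu₁ t))
    have heq : ((-Complex.I) • (A * u₁ t)) * (u₁ t)ᴴ + u₁ t * ((-Complex.I) • (A * u₁ t))ᴴ
        = (-Complex.I) • (A * (u₁ t * (u₁ t)ᴴ)) + Complex.I • ((u₁ t * (u₁ t)ᴴ) * Aᴴ) := by
      simp [Matrix.conjTranspose_smul, Matrix.conjTranspose_mul, smul_mul_assoc,
        mul_smul_comm, Matrix.mul_assoc]
    rwa [heq] at this
  have hB₂ : ∀ t : ℝ, HasDerivAt (fun s => u₂ s * (u₂ s)ᴴ)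
      (Complex.I • (A * (u₂ t * (u₂ t)ᴴ)) + (-Complex.I) • ((u₂ t * (u₂ t)ᴴ) * Aᴴ)) t := by
    intro t
    have := hasDerivAt_matmul (hu₂ t) (hasDerivAt_ct (hu₂ t))
    have heq : (Complex.I • (A * u₂ t)) * (u₂ t)ᴴ + u₂ t * (Complex.I • (A * u₂ t))ᴴ
        = Complex.I • (A * (u₂ t * (u₂ t)ᴴ)) + (-Complex.I) • ((u₂ t * (u₂ t)ᴴ) * Aᴴ) := by
      simp [Matrix.conjTranspose_smul, Matrix.conjTranspose_mul, smul_mul_assoc,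
        mul_smul_comm, Matrix.mul_assoc]
    rwa [heq] at this
  have hh : ∀ t : ℝ, HasDerivAt h
      (((-Complex.I) • (A * (u₁ t * (u₁ t)ᴴ)) + Complex.I • ((u₁ t * (u₁ t)ᴴ) * Aᴴ)) +
       (Complex.I • (A * (u₂ t * (u₂ t)ᴴ)) + (-Complex.I) • ((u₂ t * (u₂ t)ᴴ) * Aᴴ))) t :=
    fun t => (hB₁ t).add (hB₂ t)
  have hg : ∀ t : ℝ, HasDerivAt g (A * h t - h t * Aᴴ) t := by
    intro t
    have := ((hB₁ t).sub (hB₂ t)).const_smul Complex.I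
    have heq : Complex.I •
        ((((-Complex.I) • (A * (u₁ t * (u₁ t)ᴴ)) + Complex.I • ((u₁ t * (u₁ t)ᴴ) * Aᴴ))) -
         ((Complex.I • (A * (u₂ t * (u₂ t)ᴴ)) + (-Complex.I) • ((u₂ t * (u₂ t)ᴴ) * Aᴴ))))
        = A * h t - h t * Aᴴ := by
      simp only [hhdef, smul_sub, smul_add, smul_smul, mul_neg, Complex.I_mul_I, neg_neg,
        one_smul, neg_one_smul, Matrix.mul_add, Matrix.add_mul]
      abel
    rwa [heq] at this
  have hcont_h : Continuous h :=
    continuous_iff_continuousAt.2 fun t => (hh t).continuousAt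
  have hcont_int : Continuous (fun t => A * h t - h t * Aᴴ) := by
    have h1 : Continuous (fun t => A * h t) := by
      have := (mulL n n n A).continuous.comp hcont_h
      exact this
    have h2 : Continuous (fun t => h t * Aᴴ) := by
      have := ((mulL n n n).flip Aᴴ).continuous.comp hcont_h
      exact this
    exact h1.sub h2
  intro x _
  have hftc : (∫ t in (0:ℝ)..x, (A * h t - h t * Aᴴ)) = g x - g 0 :=
    intervalIntegral.integral_eq_sub_of_hasDerivAt (fun t _ => hg t)
      (hcont_int.intervalIntegrable 0 x)
  have hint := hcont_h.intervalIntegrable (μ := volume) 0 x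
  have hIl : A * (∫ t in (0:ℝ)..x, h t) = ∫ t in (0:ℝ)..x, A * h t := by
    have := (mulL n n n A).intervalIntegral_comp_comm hint
    exact this.symm
  have hIr : (∫ t in (0:ℝ)..x, h t) * Aᴴ = ∫ t in (0:ℝ)..x, h t * Aᴴ := by
    have := ((mulL n n n).flip Aᴴ).intervalIntegral_comp_comm hint
    exact this.symm
  have hsub : (∫ t in (0:ℝ)..x, (A * h t - h t * Aᴴ))
      = (∫ t in (0:ℝ)..x, A * h t) - (∫ t in (0:ℝ)..x, h t * Aᴴ) := by
    apply intervalIntegral.integral_sub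
    · have : Continuous (fun t => A * h t) := by
        have := (mulL n n n A).continuous.comp hcont_h
        exact this
      exact this.intervalIntegrable 0 x
    · have : Continuous (fun t => h t * Aᴴ) := by
        have := ((mulL n n n).flip Aᴴ).continuous.comp hcont_h
        exact this
      exact this.intervalIntegrable 0 x
  have hSx : S x = S₀ + ∫ t in (0:ℝ)..x, h t := by
    rw [hS x]
    congr 1
    exact intervalIntegral.integral_congr fun t _ => key2 t
  have hg0 : g 0 = Complex.I • (Λ 0 * j * (Λ 0)ᴴ) := by rw [hgdef]; rw [key 0]
  have hgx : g x = Complex.I • (Λ x * j * (Λ x)ᴴ) := by rw [hgdef]; rw [key x]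
  calc A * S x - S x * Aᴴ
      = (A * S₀ - S₀ * Aᴴ) + (A * (∫ t in (0:ℝ)..x, h t) - (∫ t in (0:ℝ)..x, h t) * Aᴴ) := by
        rw [hSx, Matrix.mul_add, Matrix.add_mul]; abel
    _ = g 0 + (g x - g 0) := by
        rw [h0, ← hg0, hIl, hIr, ← hsub, hftc]
    _ = g x := by abel
    _ = Complex.I • (Λ x * j * (Λ x)ᴴ) := hgx
end

section
/- Let S : [0,∞) → n×n complex matrices be differentiable with S(x) positive definite for all x, and define R(x) = e^{-ixA} S(x) e^{ixA*} for an n×n matrix A. If A S(x) - S(x) A* = i Λ(x) j Λ(x)* and S'(x) = Λ(x) Λ(x)*, where Λ(x) = [e^{-ixA}θ₁, e^{ixA}θ₂] and j = diag(I_{m₁}, -I_{m₂}), then R'(x) = e^{-ixA}(Λ(x) j Λ(x)* + Λ(x) Λ(x)*) e^{ixA*} = 2 e^{-ixA}(e^{-ixA}θ₁)(e^{-ixA}θ₁)* e^{ixA*} ≥ 0, i.e., R is monotonically nondecreasing in the Loewner order. -/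
open Matrix NormedSpace
open scoped ComplexOrder

attribute [local instance] Matrix.frobeniusNormedAddCommGroup Matrix.frobeniusNormedSpace

attribute [local instance] Matrix.frobeniusNormedRing Matrix.frobeniusNormedAlgebra

private theorem hasDerivAt_comp_ofReal' {F : Type*} [NormedAddCommGroup F] [NormedSpace ℂ F]
    {f : ℂ → F} {f' : F} {z : ℝ} (hf : HasDerivAt f f' (z : ℂ)) :
    HasDerivAt (fun t : ℝ => f (t : ℂ)) f' z := by
  simpa [Function.comp_def] using (hf.scomp z Complex.ofRealCLM.hasDerivAt :)

/-- If `S' = Λ Λ*`, `A S - S A* = i Λ j Λ*` and `R(x) = e^{-ixA} S(x) e^{ixA*}`,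
then `R'(x) = e^{-ixA}(Λ j Λ* + Λ Λ*)e^{ixA*} = 2 e^{-ixA}(e^{-ixA}θ₁)(e^{-ixA}θ₁)* e^{ixA*} ≥ 0`,
i.e. `R` is monotonically nondecreasing in the Loewner order. -/
theorem R_monotone_derivative {n m₁ m₂ : ℕ}
    (A : Matrix (Fin n) (Fin n) ℂ)
    (θ₁ : Matrix (Fin n) (Fin m₁) ℂ) (θ₂ : Matrix (Fin n) (Fin m₂) ℂ)
    (E : ℝ → Matrix (Fin n) (Fin n) ℂ)
    (hE : ∀ x : ℝ, E x = exp ((-(Complex.I * (x : ℂ))) • A))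
    (Λ : ℝ → Matrix (Fin n) (Fin m₁ ⊕ Fin m₂) ℂ)
    (hΛ : ∀ x : ℝ, Λ x = fromCols (E x * θ₁)
      (exp ((Complex.I * (x : ℂ)) • A) * θ₂))
    (j : Matrix (Fin m₁ ⊕ Fin m₂) (Fin m₁ ⊕ Fin m₂) ℂ)
    (hj : j = fromBlocks 1 0 0 (-1))
    (S : ℝ → Matrix (Fin n) (Fin n) ℂ)
    (hSpos : ∀ x : ℝ, (S x).PosDef)
    (hS' : ∀ x : ℝ, HasDerivAt S (Λ x * (Λ x)ᴴ) x)
    (hSid : ∀ x : ℝ, A * S x - S x * Aᴴ = Complex.I • (Λ x * j * (Λ x)ᴴ))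
    (R : ℝ → Matrix (Fin n) (Fin n) ℂ)
    (hR : ∀ x : ℝ, R x = E x * S x * (E x)ᴴ) :
    ∀ x : ℝ, 0 ≤ x →
      HasDerivAt R (E x * (Λ x * j * (Λ x)ᴴ + Λ x * (Λ x)ᴴ) * (E x)ᴴ) x ∧
      E x * (Λ x * j * (Λ x)ᴴ + Λ x * (Λ x)ᴴ) * (E x)ᴴ
        = (2 : ℂ) • (E x * ((E x * θ₁) * (E x * θ₁)ᴴ) * (E x)ᴴ) ∧
      (E x * (Λ x * j * (Λ x)ᴴ + Λ x * (Λ x)ᴴ) * (E x)ᴴ).PosSemidef := by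
  intro x hx
  set B : Matrix (Fin n) (Fin n) ℂ := (-Complex.I) • A with hB
  set C : Matrix (Fin n) (Fin n) ℂ := Complex.I • Aᴴ with hC
  have hEB : ∀ t : ℝ, E t = exp ((t : ℂ) • B) := by
    intro t
    rw [hE t, hB, smul_smul]
    congr 1
    ring
  have hEG : ∀ t : ℝ, (E t)ᴴ = exp ((t : ℂ) • C) := by
    intro t
    rw [hE t, ← Matrix.exp_conjTranspose, Matrix.conjTranspose_smul, hC, smul_smul]
    have : star (-(Complex.I * (t : ℂ))) = (t : ℂ) * Complex.I := by
      simp [Complex.ext_iff]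
    rw [this]
  -- derivative of E
  have hfE : E = fun t : ℝ => exp ((t : ℂ) • B) := funext hEB
  have hE'x : HasDerivAt E (E x * B) x := by
    rw [hfE]
    have h1 : HasDerivAt (fun u : ℂ => exp (u • B)) (exp ((x : ℂ) • B) * B) (x : ℂ) :=
      hasDerivAt_exp_smul_const B (x : ℂ)
    exact hasDerivAt_comp_ofReal' h1
  have hG'x : HasDerivAt (fun t : ℝ => (E t)ᴴ) (C * (E x)ᴴ) x := by
    have hfG : (fun t : ℝ => (E t)ᴴ) = fun t : ℝ => exp ((t : ℂ) • C) := funext hEG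
    rw [hEG x, hfG]
    have h1 : HasDerivAt (fun u : ℂ => exp (u • C)) (C * exp ((x : ℂ) • C)) (x : ℂ) :=
      hasDerivAt_exp_smul_const' C (x : ℂ)
    exact hasDerivAt_comp_ofReal' h1
  -- derivative of R
  have hfR : R = fun t : ℝ => E t * S t * (E t)ᴴ := funext hR
  have hRd : HasDerivAt R
      ((E x * B * S x + E x * (Λ x * (Λ x)ᴴ)) * (E x)ᴴ + E x * S x * (C * (E x)ᴴ)) x := by
    rw [hfR]
    exact (hE'x.mul (hS' x)).mul hG'x
  -- key algebraic identity
  have hBSC : B * S x + S x * C = Λ x * j * (Λ x)ᴴ := by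
    have h1 : B * S x + S x * C = (-Complex.I) • (A * S x - S x * Aᴴ) := by
      rw [hB, hC, smul_mul_assoc, mul_smul_comm, smul_sub]
      module
    rw [h1, hSid x, smul_smul, neg_mul, Complex.I_mul_I, neg_neg, one_smul]
  have hderiv_eq :
      (E x * B * S x + E x * (Λ x * (Λ x)ᴴ)) * (E x)ᴴ + E x * S x * (C * (E x)ᴴ)
        = E x * (Λ x * j * (Λ x)ᴴ + Λ x * (Λ x)ᴴ) * (E x)ᴴ := by
    rw [← hBSC]
    noncomm_ring
  have hderiv : HasDerivAt R (E x * (Λ x * j * (Λ x)ᴴ + Λ x * (Λ x)ᴴ) * (E x)ᴴ) x := by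
    rw [← hderiv_eq]; exact hRd
  -- second claim
  have hΛj : Λ x * j * (Λ x)ᴴ + Λ x * (Λ x)ᴴ = (2 : ℂ) • ((E x * θ₁) * (E x * θ₁)ᴴ) := by
    rw [hΛ x, hj, conjTranspose_fromCols_eq_fromRows_conjTranspose,
      fromCols_mul_fromBlocks, fromCols_mul_fromRows, fromCols_mul_fromRows]
    simp only [Matrix.mul_one, Matrix.mul_zero, Matrix.mul_neg, Matrix.mul_one, add_zero,
      zero_add, Matrix.neg_mul, two_smul]
    abel
  have heq2 : E x * (Λ x * j * (Λ x)ᴴ + Λ x * (Λ x)ᴴ) * (E x)ᴴ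
      = (2 : ℂ) • (E x * ((E x * θ₁) * (E x * θ₁)ᴴ) * (E x)ᴴ) := by
    rw [hΛj, mul_smul_comm, smul_mul_assoc]
  refine ⟨hderiv, heq2, ?_⟩
  -- positive semidefiniteness
  rw [heq2]
  set N : Matrix (Fin n) (Fin m₁) ℂ := E x * (E x * θ₁) with hN
  have hEN : E x * ((E x * θ₁) * (E x * θ₁)ᴴ) * (E x)ᴴ = N * Nᴴ := by
    rw [hN]
    simp only [conjTranspose_mul, Matrix.mul_assoc]
  rw [hEN]
  have h2 : (2 : ℂ) • (N * Nᴴ)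
      = (((Real.sqrt 2 : ℝ) : ℂ) • N) * ((((Real.sqrt 2 : ℝ) : ℂ) • N))ᴴ := by
    rw [Matrix.conjTranspose_smul, Matrix.smul_mul, Matrix.mul_smul, smul_smul]
    congr 1
    rw [Complex.star_def, Complex.conj_ofReal, ← Complex.ofReal_mul,
      Real.mul_self_sqrt (by norm_num)]
    norm_num
  rw [h2]
  exact posSemidef_self_mul_conjTranspose _
end

section
/- Let A be n×n, S invertible n×n, θ₁ an n×m₁ matrix, θ₂ an n×m₂ matrix, and set A^× = A - i θ₁ θ₁* S⁻¹. Then for z ∉ σ(A) ∪ σ(A^×): i θ₂* S⁻¹ (A - zI)⁻¹ θ₁ · (I_{m₁} - i θ₁* S⁻¹ (A - zI)⁻¹ θ₁)⁻¹ = -i θ₂* S⁻¹ (zI - A^×)⁻¹ θ₁. -/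
open Matrix

lemma lf_aux {n m : ℕ} (X Y : Matrix (Fin n) (Fin n) ℂ)
    (U : Matrix (Fin n) (Fin m) ℂ) (V : Matrix (Fin m) (Fin n) ℂ)
    (hXX : X⁻¹ * X = 1) (hXX' : X * X⁻¹ = 1)
    (hYY : Y⁻¹ * Y = 1) (hYY' : Y * Y⁻¹ = 1)
    (hUV : U * V = X - Y) :
    X⁻¹ * U * (1 - V * X⁻¹ * U)⁻¹ = Y⁻¹ * U := by
  have key : X⁻¹ * (U * V) * Y⁻¹ = Y⁻¹ - X⁻¹ := by
    rw [hUV, mul_sub, sub_mul, hXX, one_mul, mul_assoc, hYY', mul_one]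
  have keyR := congrArg (fun M => V * (M * U)) key
  simp only [Matrix.sub_mul, Matrix.mul_sub, Matrix.mul_assoc] at keyR
  have keyP := congrArg (fun M => M * U) key
  simp only [Matrix.sub_mul, Matrix.mul_assoc] at keyP
  have h1 : (1 - V * X⁻¹ * U) * (1 + V * Y⁻¹ * U) = 1 := by
    simp only [Matrix.sub_mul, Matrix.mul_add, Matrix.add_mul, Matrix.one_mul,
      Matrix.mul_one, Matrix.mul_assoc]
    rw [keyR]
    abel
  have hMinv : (1 - V * X⁻¹ * U)⁻¹ = 1 + V * Y⁻¹ * U := Matrix.inv_eq_right_inv h1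
  rw [hMinv]
  simp only [Matrix.mul_add, Matrix.mul_one, Matrix.mul_assoc]
  rw [keyP]
  abel

/-- For invertible `S`, `A^× = A - iθ₁θ₁*S⁻¹` and `z ∉ σ(A) ∪ σ(A^×)`:
`iθ₂*S⁻¹(A - zI)⁻¹θ₁ (I - iθ₁*S⁻¹(A - zI)⁻¹θ₁)⁻¹ = -iθ₂*S⁻¹(zI - A^×)⁻¹θ₁`. -/
theorem linear_fractional_identity {n m₁ m₂ : ℕ}
    (A S : Matrix (Fin n) (Fin n) ℂ)
    (θ₁ : Matrix (Fin n) (Fin m₁) ℂ) (θ₂ : Matrix (Fin n) (Fin m₂) ℂ)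
    (hS : IsUnit S)
    (Across : Matrix (Fin n) (Fin n) ℂ)
    (hAcross : Across = A - Complex.I • (θ₁ * θ₁ᴴ * S⁻¹))
    (z : ℂ)
    (hz : z ∉ spectrum ℂ A) (hz' : z ∉ spectrum ℂ Across) :
    Complex.I • (θ₂ᴴ * S⁻¹ * (A - z • 1)⁻¹ * θ₁) *
        (1 - Complex.I • (θ₁ᴴ * S⁻¹ * (A - z • 1)⁻¹ * θ₁))⁻¹
      = -Complex.I • (θ₂ᴴ * S⁻¹ * (z • 1 - Across)⁻¹ * θ₁) := by
  have hX : IsUnit (A - z • (1 : Matrix (Fin n) (Fin n) ℂ)) := by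
    have h := spectrum.notMem_iff.mp hz
    rw [Algebra.algebraMap_eq_smul_one] at h
    simpa [neg_sub] using h.neg
  have hY : IsUnit (Across - z • (1 : Matrix (Fin n) (Fin n) ℂ)) := by
    have h := spectrum.notMem_iff.mp hz'
    rw [Algebra.algebraMap_eq_smul_one] at h
    simpa [neg_sub] using h.neg
  set X : Matrix (Fin n) (Fin n) ℂ := A - z • 1 with hXdef
  set Y : Matrix (Fin n) (Fin n) ℂ := Across - z • 1 with hYdef
  set U : Matrix (Fin n) (Fin m₁) ℂ := Complex.I • θ₁ with hUdef
  set V : Matrix (Fin m₁) (Fin n) ℂ := θ₁ᴴ * S⁻¹ with hVdef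
  have hXX : X⁻¹ * X = 1 := Matrix.nonsing_inv_mul X ((Matrix.isUnit_iff_isUnit_det X).mp hX)
  have hXX' : X * X⁻¹ = 1 := Matrix.mul_nonsing_inv X ((Matrix.isUnit_iff_isUnit_det X).mp hX)
  have hYY : Y⁻¹ * Y = 1 := Matrix.nonsing_inv_mul Y ((Matrix.isUnit_iff_isUnit_det Y).mp hY)
  have hYY' : Y * Y⁻¹ = 1 := Matrix.mul_nonsing_inv Y ((Matrix.isUnit_iff_isUnit_det Y).mp hY)
  have hUV : U * V = X - Y := by
    rw [hUdef, hVdef, hXdef, hYdef, hAcross, Matrix.smul_mul, ← Matrix.mul_assoc]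
    abel
  have push := lf_aux X Y U V hXX hXX' hYY hYY' hUV
  have hM : (1 - Complex.I • (θ₁ᴴ * S⁻¹ * X⁻¹ * θ₁)) = 1 - V * X⁻¹ * U := by
    rw [hUdef, hVdef, Matrix.mul_smul]
  have hnegY : (z • (1 : Matrix (Fin n) (Fin n) ℂ) - Across)⁻¹ = -(Y⁻¹) := by
    have hz1 : z • (1 : Matrix (Fin n) (Fin n) ℂ) - Across = -Y := by rw [hYdef]; abel
    rw [hz1]
    refine Matrix.inv_eq_right_inv ?_
    simp [hYY']
  rw [hM, hnegY]
  have lhs : Complex.I • (θ₂ᴴ * S⁻¹ * X⁻¹ * θ₁) * (1 - V * X⁻¹ * U)⁻¹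
      = θ₂ᴴ * S⁻¹ * (X⁻¹ * U * (1 - V * X⁻¹ * U)⁻¹) := by
    rw [hUdef]
    simp only [Matrix.mul_smul, Matrix.smul_mul, Matrix.mul_assoc]
  rw [lhs, push, hUdef]
  simp only [Matrix.mul_smul, Matrix.mul_neg, Matrix.neg_mul, neg_smul, smul_neg,
    Matrix.mul_assoc, neg_neg]
end

section
/- Let A be n×n complex, θ₁ n×m₁, θ₂ n×m₂, Λ(x) = [e^{-ixA}θ₁, e^{ixA}θ₂], j = diag(I_{m₁}, -I_{m₂}), and S(x) = S(0) + ∫₀ˣ Λ(t) j Λ(t)* dt with S(x) invertible, satisfying the identity A S(x) - S(x) A* = i Λ(x) Λ(x)*. Define Q(x) = e^{ixA} S(x) e^{-ixA*}. Then Q'(x) = e^{ixA} Λ(x)(j - I_m) Λ(x)* e^{-ixA*} = -2 e^{ixA}(e^{ixA}θ₂)(e^{ixA}θ₂)* e^{-ixA*} ≤ 0, so Q is monotonically nonincreasing in the Loewner order. -/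
open Matrix NormedSpace
open scoped ComplexOrder

attribute [local instance] Matrix.frobeniusNormedAddCommGroup Matrix.frobeniusNormedSpace
attribute [local instance] Matrix.frobeniusNormedRing Matrix.frobeniusNormedAlgebra

/-- If `S' = Λ j Λ*`, `A S - S A* = i Λ Λ*`, `S(x)` invertible and
`Q(x) = e^{ixA} S(x) e^{-ixA*}`, then
`Q'(x) = e^{ixA} Λ(x)(j - I)Λ(x)* e^{-ixA*} = -2 e^{ixA}(e^{ixA}θ₂)(e^{ixA}θ₂)* e^{-ixA*} ≤ 0`,
so `Q` is nonincreasing in the Loewner order. -/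
theorem Q_monotone_decreasing_derivative {n m₁ m₂ : ℕ}
    (A : Matrix (Fin n) (Fin n) ℂ)
    (θ₁ : Matrix (Fin n) (Fin m₁) ℂ) (θ₂ : Matrix (Fin n) (Fin m₂) ℂ)
    (F : ℝ → Matrix (Fin n) (Fin n) ℂ)
    (hF : ∀ x : ℝ, F x = exp ((Complex.I * (x : ℂ)) • A))
    (Λ : ℝ → Matrix (Fin n) (Fin m₁ ⊕ Fin m₂) ℂ)
    (hΛ : ∀ x : ℝ, Λ x = fromCols
      (exp ((-(Complex.I * (x : ℂ))) • A) * θ₁) (F x * θ₂))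
    (j : Matrix (Fin m₁ ⊕ Fin m₂) (Fin m₁ ⊕ Fin m₂) ℂ)
    (hj : j = fromBlocks 1 0 0 (-1))
    (S : ℝ → Matrix (Fin n) (Fin n) ℂ)
    (hSinv : ∀ x : ℝ, IsUnit (S x))
    (hS' : ∀ x : ℝ, HasDerivAt S (Λ x * j * (Λ x)ᴴ) x)
    (hSid : ∀ x : ℝ, A * S x - S x * Aᴴ = Complex.I • (Λ x * (Λ x)ᴴ))
    (Q : ℝ → Matrix (Fin n) (Fin n) ℂ)
    (hQ : ∀ x : ℝ, Q x = F x * S x * (F x)ᴴ) :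
    ∀ x : ℝ, 0 ≤ x →
      HasDerivAt Q (F x * (Λ x * (j - 1) * (Λ x)ᴴ) * (F x)ᴴ) x ∧
      F x * (Λ x * (j - 1) * (Λ x)ᴴ) * (F x)ᴴ
        = -((2 : ℂ) • (F x * ((F x * θ₂) * (F x * θ₂)ᴴ) * (F x)ᴴ)) ∧
      (-(F x * (Λ x * (j - 1) * (Λ x)ᴴ) * (F x)ᴴ)).PosSemidef := by
  intro x _
  set M : Matrix (Fin n) (Fin n) ℂ := Complex.I • A with hM
  have hsm : ∀ t : ℝ, (Complex.I * (t : ℂ)) • A = t • M := by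
    intro t; rw [hM, ← smul_assoc, Complex.real_smul, mul_comm]
  have hFe : ∀ t : ℝ, F t = exp (t • M) := by
    intro t; rw [hF, hsm]
  have hFeq : F = fun t : ℝ => exp (t • M) := funext hFe
  have hsmH : ∀ t : ℝ, (t • M)ᴴ = t • Mᴴ := by
    intro t; ext i k; simp [Matrix.conjTranspose_apply]
  have hGe : ∀ t : ℝ, (F t)ᴴ = exp (t • Mᴴ) := by
    intro t
    rw [hFe, ← Matrix.exp_conjTranspose, hsmH]
  have hF' : HasDerivAt F (M * F x) x := by
    rw [hFeq]
    exact hasDerivAt_exp_smul_const' (𝕂 := ℝ) M x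
  have hG' : HasDerivAt (fun t : ℝ => (F t)ᴴ) (Mᴴ * (F x)ᴴ) x := by
    have heq : (fun t : ℝ => (F t)ᴴ) = fun t : ℝ => exp (t • Mᴴ) := funext hGe
    rw [heq, hGe x]
    exact hasDerivAt_exp_smul_const' (𝕂 := ℝ) Mᴴ x
  have hQd := (hF'.mul (hS' x)).mul hG'
  have hQeq : Q = fun t : ℝ => F t * S t * (F t)ᴴ := funext hQ
  -- commutation of M with F x
  have hMF : M * F x = F x * M := by
    have h := ((Commute.refl M).smul_right x).exp_right
    rw [← hFe x] at h
    exact h.eq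
  -- Mᴴ
  have hMH : Mᴴ = (-Complex.I) • Aᴴ := by
    ext i k
    simp [hM, Matrix.conjTranspose_apply]
  have hMS : M * S x + S x * Mᴴ = -(Λ x * (Λ x)ᴴ) := by
    calc M * S x + S x * Mᴴ
        = Complex.I • (A * S x) + (-Complex.I) • (S x * Aᴴ) := by
          rw [hM, hMH, smul_mul_assoc, mul_smul_comm]
      _ = Complex.I • (A * S x - S x * Aᴴ) := by
          rw [smul_sub, neg_smul, sub_eq_add_neg]
      _ = Complex.I • (Complex.I • (Λ x * (Λ x)ᴴ)) := by rw [hSid x]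
      _ = -(Λ x * (Λ x)ᴴ) := by rw [smul_smul, Complex.I_mul_I, neg_one_smul]
  have hkey : (M * F x * S x + F x * (Λ x * j * (Λ x)ᴴ)) * (F x)ᴴ
        + F x * S x * (Mᴴ * (F x)ᴴ)
      = F x * (Λ x * (j - 1) * (Λ x)ᴴ) * (F x)ᴴ := by
    have expand : Λ x * (j - 1) * (Λ x)ᴴ = Λ x * j * (Λ x)ᴴ - Λ x * (Λ x)ᴴ := by
      rw [Matrix.mul_sub, Matrix.sub_mul, Matrix.mul_one]
    rw [expand, hMF]
    have h1 : (F x * M * S x + F x * (Λ x * j * (Λ x)ᴴ)) * (F x)ᴴ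
          + F x * S x * (Mᴴ * (F x)ᴴ)
        = F x * (M * S x + S x * Mᴴ + Λ x * j * (Λ x)ᴴ) * (F x)ᴴ := by
      noncomm_ring
    rw [h1, hMS]
    noncomm_ring
  have hQ' : HasDerivAt Q (F x * (Λ x * (j - 1) * (Λ x)ᴴ) * (F x)ᴴ) x := by
    rw [hQeq]
    rw [← hkey]
    exact hQd
  -- block computation
  have hj1 : j - 1 = fromBlocks 0 0 0 ((-2 : ℂ) • (1 : Matrix (Fin m₂) (Fin m₂) ℂ)) := by
    rw [hj, ← fromBlocks_one]
    ext (i | i) (k | k) <;>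
      simp [Matrix.one_apply, Matrix.sub_apply] <;> split_ifs <;> ring
  have h2 : Λ x * (j - 1) * (Λ x)ᴴ
      = -((2 : ℂ) • ((F x * θ₂) * (F x * θ₂)ᴴ)) := by
    rw [hΛ x, hj1, fromCols_mul_fromBlocks,
      conjTranspose_fromCols_eq_fromRows_conjTranspose, fromCols_mul_fromRows]
    simp [Matrix.mul_smul, Matrix.smul_mul, smul_smul]
  have h2' : F x * (Λ x * (j - 1) * (Λ x)ᴴ) * (F x)ᴴ
      = -((2 : ℂ) • (F x * ((F x * θ₂) * (F x * θ₂)ᴴ) * (F x)ᴴ)) := by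
    rw [h2]
    simp [Matrix.mul_smul, Matrix.smul_mul, Matrix.mul_neg, Matrix.neg_mul]
  refine ⟨hQ', h2', ?_⟩
  rw [h2', neg_neg]
  have h3 : F x * ((F x * θ₂) * (F x * θ₂)ᴴ) * (F x)ᴴ
      = (F x * (F x * θ₂)) * (F x * (F x * θ₂))ᴴ := by
    simp only [conjTranspose_mul, Matrix.mul_assoc]
  rw [h3, two_smul]
  exact (posSemidef_self_mul_conjTranspose _).add (posSemidef_self_mul_conjTranspose _)
end

section
/- Let A be an n×n complex matrix and θ₁ an n×m₁ matrix such that the pair (A, θ₁) is controllable (i.e., span ⋃_{k=0}^{n-1} Im(A^k θ₁) = ℂⁿ). Then for any vector ξ ∈ ℂⁿ, if θ₁*(A* - tI)⁻¹ξ = 0 for all t in some nonempty open subset of ℝ \ σ(A*), then ξ = 0. Consequently, the matrix ∫_{-∞}^{∞} (A - tI)⁻¹θ₁θ₁*(A* - tI)⁻¹ dt is positive definite whenever σ(A) ∩ ℝ = ∅ and the integral converges. -/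
open Matrix MeasureTheory
open scoped ComplexOrder

attribute [local instance] Matrix.frobeniusNormedAddCommGroup Matrix.frobeniusNormedSpace

section AuxLemmas

open Polynomial Filter Topology

lemma aux_isUnit {n : ℕ} (B : Matrix (Fin n) (Fin n) ℂ) (z : ℂ) (hz : z ∉ spectrum ℂ B) :
    IsUnit (B - z • 1) := by
  rw [spectrum.notMem_iff] at hz
  have h : B - z • 1 = -(algebraMap ℂ (Matrix (Fin n) (Fin n) ℂ) z - B) := by
    rw [Algebra.algebraMap_eq_smul_one, neg_sub]
  rw [h]; exact hz.neg

lemma aux_notMem {n : ℕ} (B : Matrix (Fin n) (Fin n) ℂ) (z : ℂ) (hz : IsUnit (B - z • 1)) :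
    z ∉ spectrum ℂ B := by
  rw [spectrum.notMem_iff, Algebra.algebraMap_eq_smul_one, ← neg_sub]
  exact hz.neg

lemma aux_conj_sub {n : ℕ} (A : Matrix (Fin n) (Fin n) ℂ) (t : ℝ) :
    (A - (t : ℂ) • 1)ᴴ = Aᴴ - (t : ℂ) • 1 := by
  rw [Matrix.conjTranspose_sub, Matrix.conjTranspose_smul, Matrix.conjTranspose_one,
    Complex.star_def, Complex.conj_ofReal]

lemma aux_spec_conj {n : ℕ} (A : Matrix (Fin n) (Fin n) ℂ) (t : ℝ)
    (h : (t : ℂ) ∉ spectrum ℂ A) : (t : ℂ) ∉ spectrum ℂ Aᴴ := by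
  apply aux_notMem
  have hu := aux_isUnit A _ h
  have hd : IsUnit (A - (t : ℂ) • 1).det := (Matrix.isUnit_iff_isUnit_det _).mp hu
  rw [Matrix.isUnit_iff_isUnit_det, ← aux_conj_sub, Matrix.det_conjTranspose]
  exact isUnit_star.mpr hd


-- adjugate *ᵥ in terms of inverse
lemma aux_adj_mulVec {n : ℕ} (X : Matrix (Fin n) (Fin n) ℂ) (hu : IsUnit X) (v : Fin n → ℂ) :
    X.adjugate *ᵥ v = X.det • (X⁻¹ *ᵥ v) := by
  have hd : IsUnit X.det := (Matrix.isUnit_iff_isUnit_det _).mp hu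
  have : X⁻¹ = (X.det)⁻¹ • X.adjugate := by
    rw [Matrix.inv_def, Ring.inverse_eq_inv']
  rw [this, Matrix.smul_mulVec, smul_smul, mul_inv_cancel₀ hd.ne_zero, one_smul]

-- evaluation of the polynomial entries
lemma aux_eval_entry {n m₁ : ℕ} (T : Matrix (Fin m₁) (Fin n) ℂ)
    (M : Matrix (Fin n) (Fin n) ℂ[X]) (ξ : Fin n → ℂ) (z : ℂ) (i : Fin m₁) :
    eval z (((T.map C) *ᵥ (M.adjugate *ᵥ fun j => C (ξ j))) i)
      = (T *ᵥ ((M.map (evalRingHom z)).adjugate *ᵥ ξ)) i := by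
  have hadj : ∀ j k, (evalRingHom z) (M.adjugate j k) = (M.map (evalRingHom z)).adjugate j k := by
    intro j k
    have := RingHom.map_adjugate (evalRingHom z) M
    rw [RingHom.mapMatrix_apply] at this
    rw [show (M.map (evalRingHom z)).adjugate = ((evalRingHom z).mapMatrix M).adjugate from by
      rw [RingHom.mapMatrix_apply], ← this]
    rfl
  simp only [Matrix.mulVec, dotProduct, Matrix.map_apply]
  rw [show eval z = (evalRingHom z : ℂ[X] → ℂ) from rfl]
  rw [map_sum]
  congr 1; funext j
  rw [_root_.map_mul, map_sum]
  simp only [coe_evalRingHom, eval_C]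
  congr 1
  congr 1; funext k
  rw [eval_mul, eval_C]
  congr 1
  exact hadj j k

example : True := trivial


attribute [local instance] Matrix.frobeniusNormedRing

lemma aux_limit {n m₁ : ℕ} (A : Matrix (Fin n) (Fin n) ℂ) (θ₁ : Matrix (Fin n) (Fin m₁) ℂ)
    (η : Fin n → ℂ)
    (h : ∀ t : ℝ, (t : ℂ) ∉ spectrum ℂ Aᴴ → θ₁ᴴ *ᵥ ((Aᴴ - (t : ℂ) • 1)⁻¹ *ᵥ η) = 0) :
    θ₁ᴴ *ᵥ η = 0 := by
  set B := Aᴴ with hB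
  set F : ℝ → Matrix (Fin n) (Fin n) ℂ :=
    fun t => Ring.inverse ((1 : Matrix (Fin n) (Fin n) ℂ) - (t : ℂ)⁻¹ • B) with hF
  set H : ℝ → (Fin n → ℂ) := fun t => (B - (t : ℂ) • 1)⁻¹ *ᵥ η with hH
  -- basic facts for large t
  have hgood : ∀ t : ℝ, 1 ≤ t → ‖(t : ℂ)⁻¹ • B‖ < 1 →
      (B - (t : ℂ) • 1) * ((-(t : ℂ))⁻¹ • F t) = 1 ∧ IsUnit (B - (t : ℂ) • 1) := by
    intro t h1 hx
    have ht0 : (t : ℂ) ≠ 0 := by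
      simp only [ne_eq, Complex.ofReal_eq_zero]
      intro hh; rw [hh] at h1; linarith
    have hnt0 : (-(t : ℂ)) ≠ 0 := neg_ne_zero.mpr ht0
    have hu1 : IsUnit ((1 : Matrix (Fin n) (Fin n) ℂ) - (t : ℂ)⁻¹ • B) :=
      isUnit_one_sub_of_norm_lt_one hx
    have hfact : B - (t : ℂ) • 1 =
        (-(t : ℂ)) • ((1 : Matrix (Fin n) (Fin n) ℂ) - (t : ℂ)⁻¹ • B) := by
      rw [smul_sub, smul_smul, neg_smul, neg_mul, mul_inv_cancel₀ ht0, neg_smul, one_smul,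
        sub_neg_eq_add, neg_add_eq_sub]
    have hrinv : (B - (t : ℂ) • 1) * ((-(t : ℂ))⁻¹ • F t) = 1 := by
      rw [hfact, Matrix.smul_mul, Matrix.mul_smul, smul_smul, mul_inv_cancel₀ hnt0, one_smul,
        hF, Ring.mul_inverse_cancel _ hu1]
    refine ⟨hrinv, (Matrix.isUnit_iff_isUnit_det _).mpr (Matrix.isUnit_det_of_right_inverse hrinv)⟩
  have hev : ∀ᶠ t : ℝ in atTop, 1 ≤ t ∧ ‖(t : ℂ)⁻¹ • B‖ < 1 := by
    filter_upwards [eventually_ge_atTop (max 1 (‖B‖ + 1))] with t ht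
    have h1 : (1:ℝ) ≤ t := le_trans (le_max_left _ _) ht
    have h2 : ‖B‖ + 1 ≤ t := le_trans (le_max_right _ _) ht
    have ht0 : (0:ℝ) < t := lt_of_lt_of_le one_pos h1
    refine ⟨h1, ?_⟩
    rw [norm_smul, norm_inv, Complex.norm_real, Real.norm_of_nonneg ht0.le,
      inv_mul_lt_iff₀ ht0, mul_one]
    have : (0:ℝ) ≤ ‖B‖ := norm_nonneg _
    linarith
  -- the linear maps
  let L : Matrix (Fin n) (Fin n) ℂ →ₗ[ℂ] (Fin n → ℂ) :=
    { toFun := fun M => M *ᵥ η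
      map_add' := fun M N => Matrix.add_mulVec M N η
      map_smul' := fun c M => Matrix.smul_mulVec c M η }
  have hLc : Continuous L := LinearMap.continuous_of_finiteDimensional L
  let L2 : (Fin n → ℂ) →ₗ[ℂ] (Fin m₁ → ℂ) :=
    { toFun := fun v => θ₁ᴴ *ᵥ (B *ᵥ v)
      map_add' := fun v w => by simp [Matrix.mulVec_add]
      map_smul' := fun c v => by simp [Matrix.mulVec_smul] }
  have hL2c : Continuous L2 := LinearMap.continuous_of_finiteDimensional L2
  -- tendsto facts
  have htend0 : Tendsto (fun t : ℝ => ((t : ℂ))⁻¹) atTop (𝓝 0) := by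
    have : Tendsto (fun t : ℝ => ((t⁻¹ : ℝ) : ℂ)) atTop (𝓝 ((0:ℝ):ℂ)) :=
      (Complex.continuous_ofReal.tendsto _).comp tendsto_inv_atTop_zero
    simpa using this
  have hFtend : Tendsto F atTop (𝓝 1) := by
    have hgt : Tendsto (fun t : ℝ => (1 : Matrix (Fin n) (Fin n) ℂ) - (t : ℂ)⁻¹ • B) atTop
        (𝓝 ((1 : Matrix (Fin n) (Fin n) ℂ) - (0:ℂ) • B)) :=
      tendsto_const_nhds.sub (htend0.smul_const B)
    have h1 : ContinuousAt Ring.inverse ((1 : (Matrix (Fin n) (Fin n) ℂ)ˣ) : Matrix (Fin n) (Fin n) ℂ) :=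
      NormedRing.inverse_continuousAt 1
    have := h1.tendsto.comp (by simpa using hgt)
    have h3 : Tendsto (Ring.inverse ∘ fun t : ℝ => (1 : Matrix (Fin n) (Fin n) ℂ) - (t : ℂ)⁻¹ • B)
        atTop (𝓝 1) := by simpa [Ring.inverse_one] using this
    exact h3
  have hHev : ∀ᶠ t : ℝ in atTop, H t = (-(t : ℂ))⁻¹ • (L (F t)) := by
    filter_upwards [hev] with t ⟨h1, hx⟩
    obtain ⟨hrinv, hu⟩ := hgood t h1 hx
    have hinv_eq : (B - (t : ℂ) • 1)⁻¹ = (-(t : ℂ))⁻¹ • F t := Matrix.inv_eq_right_inv hrinv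
    rw [hH]
    simp only [hinv_eq, Matrix.smul_mulVec]
    rfl
  have hHtend : Tendsto H atTop (𝓝 0) := by
    have h2 : Tendsto (fun t : ℝ => (-(t : ℂ))⁻¹ • (L (F t))) atTop (𝓝 ((0:ℂ) • L 1)) := by
      refine Tendsto.smul ?_ ((hLc.tendsto _).comp hFtend)
      have : Tendsto (fun t : ℝ => -((t:ℂ))⁻¹) atTop (𝓝 (-0)) := htend0.neg
      simpa [inv_neg] using this
    rw [zero_smul] at h2
    exact Tendsto.congr' (hHev.mono fun t ht => ht.symm) h2
  -- the constant identity
  have hceq : ∀ᶠ t : ℝ in atTop, θ₁ᴴ *ᵥ η = L2 (H t) := by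
    filter_upwards [hev] with t ⟨h1, hx⟩
    obtain ⟨hrinv, hu⟩ := hgood t h1 hx
    have hη : (B - (t : ℂ) • 1) *ᵥ H t = η := by
      rw [hH, Matrix.mulVec_mulVec, Matrix.mul_nonsing_inv _ ((Matrix.isUnit_iff_isUnit_det _).mp hu),
        Matrix.one_mulVec]
    have hzero : θ₁ᴴ *ᵥ H t = 0 := h t (aux_notMem B t (by exact hu))
    calc θ₁ᴴ *ᵥ η = θ₁ᴴ *ᵥ ((B - (t : ℂ) • 1) *ᵥ H t) := by rw [hη]
      _ = θ₁ᴴ *ᵥ (B *ᵥ H t - ((t : ℂ) • 1) *ᵥ H t) := by rw [Matrix.sub_mulVec]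
      _ = θ₁ᴴ *ᵥ (B *ᵥ H t) - (t : ℂ) • (θ₁ᴴ *ᵥ H t) := by
          rw [Matrix.mulVec_sub, Matrix.smul_mulVec, Matrix.one_mulVec, Matrix.mulVec_smul]
      _ = L2 (H t) := by rw [hzero, smul_zero, sub_zero]; rfl
  have hfinal : Tendsto (fun _ : ℝ => θ₁ᴴ *ᵥ η) atTop (𝓝 (L2 0)) := by
    refine Tendsto.congr' ?_ ((hL2c.tendsto _).comp hHtend)
    filter_upwards [hceq] with t ht using ht.symm
  have : θ₁ᴴ *ᵥ η = L2 0 := tendsto_nhds_unique tendsto_const_nhds hfinal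
  rw [this]
  simp only [L2]
  rw [show ((0 : Fin n → ℂ)) = (0 : Fin n → ℂ) from rfl]
  simp [Matrix.mulVec_zero]

lemma aux_key {n m₁ : ℕ} (A : Matrix (Fin n) (Fin n) ℂ) (θ₁ : Matrix (Fin n) (Fin m₁) ℂ)
    (hctrl : Submodule.span ℂ
      (⋃ k : Fin n, Set.range (fun v : Fin m₁ → ℂ => (A ^ (k : ℕ) * θ₁) *ᵥ v)) = ⊤)
    (ξ : Fin n → ℂ) (U : Set ℝ) (hU : IsOpen U) (hne : U.Nonempty)
    (h : ∀ t ∈ U, (t : ℂ) ∉ spectrum ℂ Aᴴ ∧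
      θ₁ᴴ *ᵥ ((Aᴴ - (t : ℂ) • 1)⁻¹ *ᵥ ξ) = 0) : ξ = 0 := by
  classical
  set B := Aᴴ with hB
  set M : Matrix (Fin n) (Fin n) ℂ[X] := B.map C - (X : ℂ[X]) • 1 with hM
  have hMmap : ∀ z : ℂ, M.map (evalRingHom z) = B - z • 1 := by
    intro z; ext i j
    by_cases hij : i = j <;>
      simp [hM, Matrix.map_apply, Matrix.sub_apply, Matrix.smul_apply, Matrix.one_apply, hij]
  set q : Fin m₁ → ℂ[X] := (θ₁ᴴ.map C) *ᵥ (M.adjugate *ᵥ fun j => C (ξ j)) with hq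
  have hqeval : ∀ (z : ℂ) (i : Fin m₁),
      eval z (q i) = (θ₁ᴴ *ᵥ ((B - z • 1).adjugate *ᵥ ξ)) i := by
    intro z i; rw [hq, aux_eval_entry, hMmap]
  have hroot : ∀ (i : Fin m₁), ∀ t ∈ U, IsRoot (q i) (t : ℂ) := by
    intro i t ht
    obtain ⟨hsp, hv⟩ := h t ht
    have hu := aux_isUnit B _ hsp
    rw [IsRoot.def, hqeval, aux_adj_mulVec _ hu, Matrix.mulVec_smul, hv, smul_zero]
    rfl
  have hUinf : U.Infinite := by
    obtain ⟨t₀, ht₀⟩ := hne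
    obtain ⟨ε, hε, hball⟩ := Metric.isOpen_iff.mp hU t₀ ht₀
    have hsub : Set.Ioo (t₀ - ε) (t₀ + ε) ⊆ U := by
      rw [← Real.ball_eq_Ioo]; exact hball
    exact (Set.Ioo_infinite (by linarith)).mono hsub
  have hq0 : ∀ i, q i = 0 := by
    intro i
    refine Polynomial.eq_zero_of_infinite_isRoot _ ?_
    refine Set.Infinite.mono ?_ (hUinf.image (Complex.ofReal_injective.injOn))
    rintro z ⟨t, ht, rfl⟩
    exact hroot i t ht
  have fact0 : ∀ z : ℂ, z ∉ spectrum ℂ B → θ₁ᴴ *ᵥ ((B - z • 1)⁻¹ *ᵥ ξ) = 0 := by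
    intro z hz
    have hu := aux_isUnit B z hz
    have hd : IsUnit (B - z • 1).det := (Matrix.isUnit_iff_isUnit_det _).mp hu
    funext i
    have h0 : eval z (q i) = 0 := by rw [hq0 i]; simp
    rw [hqeval, aux_adj_mulVec _ hu, Matrix.mulVec_smul] at h0
    have h1 : (B - z • 1).det * (θ₁ᴴ *ᵥ ((B - z • 1)⁻¹ *ᵥ ξ)) i = 0 := h0
    rcases mul_eq_zero.mp h1 with h2 | h2
    · exact absurd h2 hd.ne_zero
    · exact h2
  -- the inductive step
  have Q : ∀ k : ℕ, ∀ z : ℂ, z ∉ spectrum ℂ B →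
      θ₁ᴴ *ᵥ ((B - z • 1)⁻¹ *ᵥ (B ^ k *ᵥ ξ)) = 0 := by
    intro k
    induction k with
    | zero => intro z hz; simpa [Matrix.one_mulVec] using fact0 z hz
    | succ k ih =>
      have Ek : θ₁ᴴ *ᵥ (B ^ k *ᵥ ξ) = 0 := aux_limit A θ₁ _ (fun t ht => ih (t : ℂ) ht)
      intro z hz
      have hu := aux_isUnit B z hz
      have hd : IsUnit (B - z • 1).det := (Matrix.isUnit_iff_isUnit_det _).mp hu
      set S : Matrix (Fin n) (Fin n) ℂ := B - z • 1 with hS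
      have hSS : S * S⁻¹ = 1 := Matrix.mul_nonsing_inv _ hd
      have hS'S : S⁻¹ * S = 1 := Matrix.nonsing_inv_mul _ hd
      have hc : B * S = S * B := by
        rw [hS, Matrix.mul_sub, Matrix.sub_mul, Matrix.mul_smul, Matrix.smul_mul,
          Matrix.mul_one, Matrix.one_mul]
      have hcomm : S⁻¹ * B = B * S⁻¹ := by
        calc S⁻¹ * B = S⁻¹ * B * (S * S⁻¹) := by rw [hSS, Matrix.mul_one]
          _ = S⁻¹ * (B * S) * S⁻¹ := by simp only [Matrix.mul_assoc]
          _ = S⁻¹ * (S * B) * S⁻¹ := by rw [hc]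
          _ = (S⁻¹ * S) * (B * S⁻¹) := by simp only [Matrix.mul_assoc]
          _ = B * S⁻¹ := by rw [hS'S, Matrix.one_mul]
      have hkey : B * S⁻¹ = 1 + z • S⁻¹ := by
        have : B * S⁻¹ = (S + z • 1) * S⁻¹ := by rw [hS]; congr 1; rw [sub_add_cancel]
        rw [this, Matrix.add_mul, hSS, Matrix.smul_mul, Matrix.one_mul]
      have hw : B ^ (k + 1) *ᵥ ξ = B *ᵥ (B ^ k *ᵥ ξ) := by
        rw [Matrix.mulVec_mulVec, ← pow_succ']
      have hx : S⁻¹ *ᵥ (B ^ (k + 1) *ᵥ ξ) =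
          (B ^ k *ᵥ ξ) + z • (S⁻¹ *ᵥ (B ^ k *ᵥ ξ)) := by
        rw [hw, Matrix.mulVec_mulVec, hcomm, hkey, Matrix.add_mulVec, Matrix.one_mulVec,
          Matrix.smul_mulVec]
      show θ₁ᴴ *ᵥ (S⁻¹ *ᵥ (B ^ (k + 1) *ᵥ ξ)) = 0
      rw [hx, Matrix.mulVec_add, Matrix.mulVec_smul, Ek]
      have hihz : θ₁ᴴ *ᵥ (S⁻¹ *ᵥ (B ^ k *ᵥ ξ)) = 0 := ih z hz
      rw [hihz, smul_zero, add_zero]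
  have main : ∀ k : ℕ, θ₁ᴴ *ᵥ (B ^ k *ᵥ ξ) = 0 :=
    fun k => aux_limit A θ₁ _ (fun t ht => Q k (t : ℂ) ht)
  -- final functional argument
  have hfun : ∀ k : ℕ, (A ^ k * θ₁)ᴴ *ᵥ ξ = 0 := by
    intro k
    have h1 : (A ^ k * θ₁)ᴴ = θ₁ᴴ * B ^ k := by
      rw [Matrix.conjTranspose_mul, hB, Matrix.conjTranspose_pow]
    rw [h1, ← Matrix.mulVec_mulVec]
    exact main k
  let ψ : (Fin n → ℂ) →ₗ[ℂ] ℂ :=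
    { toFun := fun x => x ⬝ᵥ star ξ
      map_add' := fun a b => add_dotProduct a b (star ξ)
      map_smul' := fun c a => smul_dotProduct c a (star ξ) }
  have hgen : (⋃ k : Fin n, Set.range (fun v : Fin m₁ → ℂ => (A ^ (k : ℕ) * θ₁) *ᵥ v)) ⊆
      (LinearMap.ker ψ : Set (Fin n → ℂ)) := by
    rintro x hx
    obtain ⟨k, v, rfl⟩ : ∃ (k : Fin n) (v : Fin m₁ → ℂ), (A ^ (k : ℕ) * θ₁) *ᵥ v = x := by
      obtain ⟨s, ⟨k, rfl⟩, hx⟩ := hx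
      obtain ⟨v, rfl⟩ := hx
      exact ⟨k, v, rfl⟩
    simp only [SetLike.mem_coe, LinearMap.mem_ker]
    show ((A ^ (k : ℕ) * θ₁) *ᵥ v) ⬝ᵥ star ξ = 0
    rw [dotProduct_comm, Matrix.dotProduct_mulVec]
    have hstar : star ξ ᵥ* (A ^ (k : ℕ) * θ₁) = star ((A ^ (k : ℕ) * θ₁)ᴴ *ᵥ ξ) := by
      rw [Matrix.star_mulVec, Matrix.conjTranspose_conjTranspose]
    rw [hstar, hfun, star_zero, zero_dotProduct]
  have hker : ∀ x : Fin n → ℂ, ψ x = 0 := by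
    intro x
    have hle : Submodule.span ℂ
        (⋃ k : Fin n, Set.range (fun v : Fin m₁ → ℂ => (A ^ (k : ℕ) * θ₁) *ᵥ v)) ≤
        LinearMap.ker ψ := Submodule.span_le.mpr hgen
    rw [hctrl] at hle
    exact LinearMap.mem_ker.mp (hle Submodule.mem_top)
  funext j
  have hj := hker (Pi.single j 1)
  have : star (ξ j) = 0 := by
    have h1 : ψ (Pi.single j 1) = star (ξ j) := by
      show Pi.single j 1 ⬝ᵥ star ξ = star (ξ j)
      rw [single_dotProduct, one_mul]
      rfl
    rw [← h1, hj]
  simpa using star_eq_zero.mp this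


lemma aux_posdef {n m₁ : ℕ} (A : Matrix (Fin n) (Fin n) ℂ) (θ₁ : Matrix (Fin n) (Fin m₁) ℂ)
    (hker : ∀ x : Fin n → ℂ,
      (∀ t : ℝ, θ₁ᴴ *ᵥ ((Aᴴ - (t : ℂ) • 1)⁻¹ *ᵥ x) = 0) → x = 0)
    (hA : ∀ t : ℝ, (t : ℂ) ∉ spectrum ℂ A)
    (hint : @Integrable _ _ SeminormedAddGroup.toContinuousENorm _ _ (fun t : ℝ =>
      (A - (t : ℂ) • 1)⁻¹ * (θ₁ * θ₁ᴴ) * (Aᴴ - (t : ℂ) • 1)⁻¹) volume) :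
    (∫ t : ℝ,
      (A - (t : ℂ) • 1)⁻¹ * (θ₁ * θ₁ᴴ) * (Aᴴ - (t : ℂ) • 1)⁻¹).PosDef := by
  classical
  set f : ℝ → Matrix (Fin n) (Fin n) ℂ :=
    fun t => (A - (t : ℂ) • 1)⁻¹ * (θ₁ * θ₁ᴴ) * (Aᴴ - (t : ℂ) • 1)⁻¹ with hf
  have hAH : ∀ t : ℝ, (t : ℂ) ∉ spectrum ℂ Aᴴ := fun t => aux_spec_conj A t (hA t)
  -- continuity of the resolvents
  have hinvcont : ∀ (B : Matrix (Fin n) (Fin n) ℂ),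
      (∀ t : ℝ, (t : ℂ) ∉ spectrum ℂ B) → Continuous fun t : ℝ => (B - (t : ℂ) • 1)⁻¹ := by
    intro B hB
    have heq : (fun t : ℝ => (B - (t : ℂ) • 1)⁻¹)
        = fun t : ℝ => Ring.inverse (B - (t : ℂ) • 1) := by
      funext s; rw [Matrix.nonsing_inv_eq_ringInverse]
    rw [heq, continuous_iff_continuousAt]
    intro t
    have h1 : Continuous fun t : ℝ => B - (t : ℂ) • 1 :=
      continuous_const.sub ((Complex.continuous_ofReal.smul continuous_const))
    obtain ⟨u, hu⟩ := aux_isUnit B _ (hB t)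
    have h2 : ContinuousAt Ring.inverse (B - (t : ℂ) • 1) := by
      rw [← hu]; exact NormedRing.inverse_continuousAt u
    show ContinuousAt ((Ring.inverse : Matrix (Fin n) (Fin n) ℂ → Matrix (Fin n) (Fin n) ℂ) ∘
      (fun t : ℝ => B - (t : ℂ) • 1)) t
    exact ContinuousAt.comp (f := fun t : ℝ => B - (t : ℂ) • 1) (x := t) h2 h1.continuousAt
  have hRcont := hinvcont A hA
  have hScont := hinvcont Aᴴ hAH
  have hfcont : Continuous f := (hRcont.mul continuous_const).mul hScont
  -- hermitian pointwise
  have hsym : ∀ t : ℝ, (f t)ᴴ = f t := by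
    intro t
    rw [hf]
    simp only [Matrix.conjTranspose_mul, Matrix.conjTranspose_nonsing_inv, aux_conj_sub,
      Matrix.conjTranspose_conjTranspose]
    simp [Matrix.mul_assoc]
  -- conjTranspose as a real-linear continuous map
  let φ : Matrix (Fin n) (Fin n) ℂ →ₗ[ℝ] Matrix (Fin n) (Fin n) ℂ :=
    { toFun := fun M => Mᴴ
      map_add' := fun M N => Matrix.conjTranspose_add M N
      map_smul' := fun c M => by
        ext i j
        simp [Matrix.conjTranspose_apply, star_smul] }
  let φC : Matrix (Fin n) (Fin n) ℂ →L[ℝ] Matrix (Fin n) (Fin n) ℂ :=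
    ⟨φ, φ.continuous_of_finiteDimensional⟩
  have herm : (∫ t : ℝ, f t).IsHermitian := by
    have h1 : ∫ t : ℝ, φC (f t) = φC (∫ t : ℝ, f t) := φC.integral_comp_comm hint
    have h2 : (fun t : ℝ => φC (f t)) = f := by funext t; exact hsym t
    show (∫ t : ℝ, f t)ᴴ = ∫ t : ℝ, f t
    calc (∫ t : ℝ, f t)ᴴ = φC (∫ t : ℝ, f t) := rfl
      _ = ∫ t : ℝ, φC (f t) := h1.symm
      _ = ∫ t : ℝ, f t := by rw [h2]
  rw [Matrix.posDef_iff_dotProduct_mulVec]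
  refine ⟨herm, ?_⟩
  intro x hx
  let ψ : Matrix (Fin n) (Fin n) ℂ →ₗ[ℝ] ℂ :=
    { toFun := fun M => dotProduct (star x) (M *ᵥ x)
      map_add' := fun M N => by simp [Matrix.add_mulVec, dotProduct_add]
      map_smul' := fun c M => by
        simp [Matrix.smul_mulVec, dotProduct_smul] }
  let ψC : Matrix (Fin n) (Fin n) ℂ →L[ℝ] ℂ := ⟨ψ, ψ.continuous_of_finiteDimensional⟩
  set y : ℝ → Fin m₁ → ℂ := fun t => θ₁ᴴ *ᵥ ((Aᴴ - (t : ℂ) • 1)⁻¹ *ᵥ x) with hy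
  have hyg : ∀ t : ℝ, ψC (f t) = dotProduct (star (y t)) (y t) := by
    intro t
    have hW : y t = (θ₁ᴴ * (Aᴴ - (t : ℂ) • 1)⁻¹) *ᵥ x := by
      rw [hy, ← Matrix.mulVec_mulVec]
    have hWH : (θ₁ᴴ * (Aᴴ - (t : ℂ) • 1)⁻¹)ᴴ = (A - (t : ℂ) • 1)⁻¹ * θ₁ := by
      rw [Matrix.conjTranspose_mul, Matrix.conjTranspose_nonsing_inv, aux_conj_sub,
        Matrix.conjTranspose_conjTranspose]
      congr 1
      rw [Matrix.conjTranspose_conjTranspose]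
    have hWW : (θ₁ᴴ * (Aᴴ - (t : ℂ) • 1)⁻¹)ᴴ * (θ₁ᴴ * (Aᴴ - (t : ℂ) • 1)⁻¹) = f t := by
      rw [hWH, hf]
      simp [Matrix.mul_assoc]
    show dotProduct (star x) (f t *ᵥ x) = _
    rw [← hWW, ← Matrix.mulVec_mulVec, Matrix.dotProduct_mulVec, ← Matrix.star_mulVec, ← hW]
  have hgint : Integrable (fun t : ℝ => ψC (f t)) := ψC.integrable_comp hint
  set r : ℝ → ℝ := fun t => (ψC (f t)).re with hr
  have hsum : ∀ t : ℝ, dotProduct (star (y t)) (y t)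
      = ((∑ i, Complex.normSq (y t i) : ℝ) : ℂ) := by
    intro t
    rw [Complex.ofReal_sum]
    simp only [dotProduct, Pi.star_apply]
    refine Finset.sum_congr rfl fun i _ => ?_
    rw [Complex.normSq_eq_conj_mul_self]
    rfl
  have hrt : ∀ t, r t = ∑ i, Complex.normSq (y t i) := by
    intro t
    rw [hr]
    show (ψC (f t)).re = _
    rw [hyg t, hsum t, Complex.ofReal_re]
  have hgr : ∀ t, ψC (f t) = ((r t : ℝ) : ℂ) := by
    intro t; rw [hyg t, hsum t, hrt t]
  have hrint : Integrable r := Complex.reCLM.integrable_comp hgint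
  have hrnonneg : ∀ t, 0 ≤ r t := fun t => by
    rw [hrt t]; exact Finset.sum_nonneg fun i _ => Complex.normSq_nonneg _
  have hdot : dotProduct (star x) ((∫ t : ℝ, f t) *ᵥ x) = ((∫ t : ℝ, r t : ℝ) : ℂ) := by
    calc dotProduct (star x) ((∫ t : ℝ, f t) *ᵥ x) = ψC (∫ t : ℝ, f t) := rfl
      _ = ∫ t : ℝ, ψC (f t) := (ψC.integral_comp_comm hint).symm
      _ = ∫ t : ℝ, ((r t : ℝ) : ℂ) := by congr 1; funext t; exact hgr t
      _ = ((∫ t : ℝ, r t : ℝ) : ℂ) := integral_ofReal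
  have hrcont : Continuous r := Complex.continuous_re.comp (ψC.continuous.comp hfcont)
  have hrpos : 0 < ∫ t : ℝ, r t := by
    rcases (integral_nonneg (show 0 ≤ r from hrnonneg)).lt_or_eq with hlt | heq
    · exact hlt
    · exfalso
      have hr0 : r =ᵐ[volume] 0 :=
        (integral_eq_zero_iff_of_nonneg hrnonneg hrint).mp heq.symm
      have hreq : r = 0 := (Continuous.ae_eq_iff_eq volume hrcont continuous_const).mp hr0
      have hy0 : ∀ t : ℝ, y t = 0 := by
        intro t
        funext i
        have h1 : r t = 0 := by rw [hreq]; rfl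
        rw [hrt t] at h1
        have h2 := (Finset.sum_eq_zero_iff_of_nonneg
          (fun i _ => Complex.normSq_nonneg (y t i))).mp h1 i (Finset.mem_univ i)
        exact Complex.normSq_eq_zero.mp h2
      exact hx (hker x fun t => hy0 t)
  rw [show dotProduct (star x) ((∫ t : ℝ, f t) *ᵥ x) = ((∫ t : ℝ, r t : ℝ) : ℂ) from hdot]
  exact Complex.zero_lt_real.mpr hrpos


end AuxLemmas

/-- If the pair `(A, θ₁)` is controllable, then any `ξ` with
`θ₁*(A* - tI)⁻¹ ξ = 0` for all `t` in a nonempty open subset of `ℝ` avoiding `σ(A*)`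
vanishes; consequently, if `σ(A) ∩ ℝ = ∅` and the integral converges, the matrix
`∫_ℝ (A - tI)⁻¹ θ₁θ₁* (A* - tI)⁻¹ dt` is positive definite. -/
theorem controllability_integral_posdef {n m₁ : ℕ}
    (A : Matrix (Fin n) (Fin n) ℂ) (θ₁ : Matrix (Fin n) (Fin m₁) ℂ)
    (hctrl : Submodule.span ℂ
      (⋃ k : Fin n, Set.range (fun v : Fin m₁ → ℂ => (A ^ (k : ℕ) * θ₁) *ᵥ v)) = ⊤) :
    (∀ ξ : Fin n → ℂ, ∀ U : Set ℝ, IsOpen U → U.Nonempty →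
      (∀ t ∈ U, (t : ℂ) ∉ spectrum ℂ Aᴴ ∧
        θ₁ᴴ *ᵥ ((Aᴴ - (t : ℂ) • 1)⁻¹ *ᵥ ξ) = 0) → ξ = 0) ∧
    ((∀ t : ℝ, (t : ℂ) ∉ spectrum ℂ A) →
      @Integrable _ _ SeminormedAddGroup.toContinuousENorm _ _ (fun t : ℝ =>
        (A - (t : ℂ) • 1)⁻¹ * (θ₁ * θ₁ᴴ) * (Aᴴ - (t : ℂ) • 1)⁻¹) volume →
      (∫ t : ℝ,
        (A - (t : ℂ) • 1)⁻¹ * (θ₁ * θ₁ᴴ) * (Aᴴ - (t : ℂ) • 1)⁻¹).PosDef) := by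
  constructor
  · exact fun ξ U hU hne h => aux_key A θ₁ hctrl ξ U hU hne h
  · intro hA hint
    exact aux_posdef A θ₁
      (fun x hx => aux_key A θ₁ hctrl x Set.univ isOpen_univ ⟨0, trivial⟩
        (fun t _ => ⟨aux_spec_conj A t (hA t), hx t⟩))
      hA hint
end
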